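/- The MacWilliams identity for symmetrized weight enumerators over ℤ₄ holds: for any ℤ₄-linear code C of length n, swe_C(a,b,c) = |C^⊥|^{-1} · swe_{C^⊥}(a+2b+c, a−c, a−2b+c). -/

import Mathlib

def dualZ4 {n : ℕ} (C : Set (Fin n → ZMod 4)) : Set (Fin n → ZMod 4) :=
  {x | ∀ y ∈ C, ∑ k, x k * y k = 0}

/-- Hamming weight of a binary word. -/
def wtH {n : ℕ} (c : Fin n → ZMod 2) : ℕ := (Finset.univ.filter (fun k => c k ≠ 0)).card

open Classical in
/-- Weight enumerator `W_A(x,y)` of a binary code. -/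
noncomputable def W {n : ℕ} (A : Set (Fin n → ZMod 2)) (x y : ℝ) : ℝ :=
  ∑ c ∈ Finset.univ.filter (· ∈ A), x ^ (n - wtH c) * y ^ (wtH c)

/-- `nI i c` counts coordinates of `c` equal to `i`. -/
def nI {n : ℕ} (i : ZMod 4) (c : Fin n → ZMod 4) : ℕ :=
  (Finset.univ.filter (fun k => c k = i)).card

open Classical in
/-- Symmetrized weight enumerator of a `ℤ₄`-code. -/
noncomputable def swe {n : ℕ} (C : Set (Fin n → ZMod 4)) (a b c : ℝ) : ℝ :=
  ∑ u ∈ Finset.univ.filter (· ∈ C), a ^ nI 0 u * b ^ (nI 1 u + nI 3 u) * c ^ nI 2 u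

open Finset

/-! ### Auxiliary development -/

noncomputable def chi (t : ZMod 4) : ℂ := Complex.I ^ t.val

lemma I_pow_mod (m : ℕ) : Complex.I ^ (m % 4) = Complex.I ^ m := by
  conv_rhs => rw [← Nat.div_add_mod m 4]
  rw [pow_add, pow_mul, Complex.I_pow_four, one_pow, one_mul]

lemma chi_add (s t : ZMod 4) : chi (s + t) = chi s * chi t := by
  unfold chi
  rw [← pow_add, ZMod.val_add, I_pow_mod]

lemma chi_zero : chi 0 = 1 := by simp [chi]

lemma chi_one' : chi 1 = Complex.I := by simp [chi, show (1 : ZMod 4).val = 1 from rfl]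
lemma chi_two' : chi 2 = -1 := by
  rw [chi, show (2 : ZMod 4).val = 2 from rfl]; exact Complex.I_sq
lemma chi_three' : chi 3 = -Complex.I := by
  rw [chi, show (3 : ZMod 4).val = 3 from rfl, pow_succ, Complex.I_sq]; ring

lemma chi_ne_one {t : ZMod 4} (h : t ≠ 0) : chi t ≠ 1 := by
  have : t = 1 ∨ t = 2 ∨ t = 3 := by revert h; revert t; decide
  rcases this with h|h|h <;> subst h
  · simp [chi_one', Complex.ext_iff]
  · rw [chi_two']; intro h; norm_num at h
  · rw [chi_three']; simp [Complex.ext_iff]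

lemma chi_sum {ι : Type*} (s : Finset ι) (f : ι → ZMod 4) :
    chi (∑ i ∈ s, f i) = ∏ i ∈ s, chi (f i) := by
  induction s using Finset.cons_induction with
  | empty => simp [chi_zero]
  | cons a s ha ih => rw [Finset.sum_cons, Finset.prod_cons, chi_add, ih]

open Classical in
lemma orth {n : ℕ} (C : AddSubgroup (Fin n → ZMod 4)) (v : Fin n → ZMod 4) :
    ∑ u ∈ univ.filter (· ∈ C), chi (∑ k, u k * v k) =
      if v ∈ dualZ4 (C : Set (Fin n → ZMod 4)) then (((univ.filter (· ∈ C)) : Finset (Fin n → ZMod 4)).card : ℂ) else 0 := by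
  by_cases hv : v ∈ dualZ4 (C : Set (Fin n → ZMod 4))
  · rw [if_pos hv]
    rw [Finset.sum_congr rfl (fun u hu => ?_), Finset.sum_const, nsmul_eq_mul, mul_one]
    have hu' : u ∈ C := (Finset.mem_filter.mp hu).2
    have : (∑ k, u k * v k) = 0 := by
      rw [← hv u hu']; exact Finset.sum_congr rfl (fun k _ => mul_comm _ _)
    rw [this, chi_zero]
  · rw [if_neg hv]
    simp only [dualZ4, Set.mem_setOf_eq, not_forall] at hv
    obtain ⟨y, hy, hvy⟩ := hv
    set S := ∑ u ∈ univ.filter (· ∈ C), chi (∑ k, u k * v k) with hS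
    have key : S * chi (∑ k, y k * v k) = S := by
      have h1 : ∑ u ∈ univ.filter (· ∈ C), chi (∑ k, (u + y) k * v k) = S :=
        Finset.sum_equiv (Equiv.addRight y)
          (fun i => by simp [AddSubgroup.add_mem_cancel_right C hy])
          (fun i _ => rfl)
      calc S * chi (∑ k, y k * v k)
          = ∑ u ∈ univ.filter (· ∈ C), chi (∑ k, u k * v k) * chi (∑ k, y k * v k) := by
            rw [hS, Finset.sum_mul]
        _ = ∑ u ∈ univ.filter (· ∈ C), chi (∑ k, (u + y) k * v k) := by
            refine Finset.sum_congr rfl (fun u _ => ?_)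
            rw [← chi_add]
            congr 1
            rw [← Finset.sum_add_distrib]
            exact Finset.sum_congr rfl (fun k _ => by simp [add_mul])
        _ = S := h1
    have hne : chi (∑ k, y k * v k) ≠ 1 := by
      apply chi_ne_one
      intro h0
      apply hvy
      rw [← h0]; exact Finset.sum_congr rfl (fun k _ => mul_comm _ _)
    by_contra hS0
    exact hne (by field_simp at key; tauto)

noncomputable def ghat (g : ZMod 4 → ℂ) (x : ZMod 4) : ℂ := ∑ t, chi (x * t) * g t

lemma fourier_expand {n : ℕ} (g : ZMod 4 → ℂ) (u : Fin n → ZMod 4) :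
    ∏ k, ghat g (u k) = ∑ v : Fin n → ZMod 4, chi (∑ k, u k * v k) * ∏ k, g (v k) := by
  unfold ghat
  rw [Finset.prod_univ_sum, Fintype.piFinset_univ]
  refine Finset.sum_congr rfl (fun v _ => ?_)
  rw [Finset.prod_mul_distrib, chi_sum]

open Classical in
lemma poisson {n : ℕ} (C : AddSubgroup (Fin n → ZMod 4)) (g : ZMod 4 → ℂ) :
    ∑ u ∈ univ.filter (· ∈ C), ∏ k, ghat g (u k) =
      (((univ.filter (· ∈ C)) : Finset (Fin n → ZMod 4)).card : ℂ) *
        ∑ v ∈ univ.filter (· ∈ dualZ4 (C : Set (Fin n → ZMod 4))), ∏ k, g (v k) := by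
  calc ∑ u ∈ univ.filter (· ∈ C), ∏ k, ghat g (u k)
      = ∑ u ∈ univ.filter (· ∈ C), ∑ v : Fin n → ZMod 4, chi (∑ k, u k * v k) * ∏ k, g (v k) :=
        Finset.sum_congr rfl (fun u _ => fourier_expand g u)
    _ = ∑ v : Fin n → ZMod 4, (∑ u ∈ univ.filter (· ∈ C), chi (∑ k, u k * v k)) * ∏ k, g (v k) := by
        rw [Finset.sum_comm]
        exact Finset.sum_congr rfl (fun v _ => by rw [Finset.sum_mul])
    _ = ∑ v : Fin n → ZMod 4, (if v ∈ dualZ4 (C : Set (Fin n → ZMod 4)) then (((univ.filter (· ∈ C)) : Finset (Fin n → ZMod 4)).card : ℂ) * ∏ k, g (v k) else 0) := by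
        refine Finset.sum_congr rfl (fun v _ => ?_)
        rw [orth]
        split <;> simp
    _ = _ := by
        rw [Finset.mul_sum, Finset.sum_filter]

lemma zmod4_univ : (univ : Finset (ZMod 4)) = {0, 1, 2, 3} := by decide

lemma sum_zmod4 {M : Type*} [AddCommMonoid M] (f : ZMod 4 → M) :
    ∑ t : ZMod 4, f t = f 0 + f 1 + f 2 + f 3 := by
  rw [zmod4_univ]
  rw [show ({0,1,2,3} : Finset (ZMod 4)) = insert 0 (insert 1 (insert 2 {3})) from rfl]
  rw [Finset.sum_insert (by decide), Finset.sum_insert (by decide),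
    Finset.sum_insert (by decide), Finset.sum_singleton]
  abel

lemma prod_zmod4 {M : Type*} [CommMonoid M] (f : ZMod 4 → M) :
    ∏ t : ZMod 4, f t = f 0 * f 1 * f 2 * f 3 := by
  rw [zmod4_univ, show ({0,1,2,3} : Finset (ZMod 4)) = insert 0 (insert 1 (insert 2 {3})) from rfl]
  rw [Finset.prod_insert (by decide), Finset.prod_insert (by decide),
    Finset.prod_insert (by decide), Finset.prod_singleton, mul_assoc, mul_assoc]

lemma prod_fiber {n : ℕ} (h : ZMod 4 → ℂ) (u : Fin n → ZMod 4) :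
    ∏ k, h (u k) = ∏ t : ZMod 4, h t ^ nI t u := by
  classical
  rw [← Finset.prod_fiberwise_of_maps_to (fun k (_ : k ∈ univ) => Finset.mem_univ (u k)) (fun k => h (u k))]
  refine Finset.prod_congr rfl (fun t _ => ?_)
  rw [Finset.prod_congr rfl (fun k hk => by rw [(Finset.mem_filter.mp hk).2]),
    Finset.prod_const]
  rfl

lemma nI_total {n : ℕ} (u : Fin n → ZMod 4) :
    nI 0 u + (nI 1 u + nI 3 u) + nI 2 u = n := by
  classical
  have := Finset.card_eq_sum_card_fiberwise (f := u) (s := univ) (t := univ)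
    (fun k _ => Finset.mem_univ (u k))
  rw [Finset.card_univ, Fintype.card_fin, sum_zmod4] at this
  unfold nI
  omega

noncomputable def gfun (a b c : ℂ) : ZMod 4 → ℂ :=
  fun t => if t = 0 then a else if t = 2 then c else b

lemma gfun_zero (a b c : ℂ) : gfun a b c 0 = a := by simp [gfun]
lemma gfun_one (a b c : ℂ) : gfun a b c 1 = b := by
  rw [gfun, if_neg (by decide), if_neg (by decide)]
lemma gfun_two (a b c : ℂ) : gfun a b c 2 = c := by
  rw [gfun, if_neg (by decide), if_pos rfl]
lemma gfun_three (a b c : ℂ) : gfun a b c 3 = b := by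
  rw [gfun, if_neg (by decide), if_neg (by decide)]

lemma ghat_gfun (a b c : ℂ) :
    ghat (gfun a b c) = gfun (a + 2*b + c) (a - c) (a - 2*b + c) := by
  funext x
  unfold ghat
  rw [sum_zmod4]
  have hx : x = 0 ∨ x = 1 ∨ x = 2 ∨ x = 3 := by revert x; decide
  rcases hx with h|h|h|h <;> subst h
  · rw [show (0*0 : ZMod 4) = 0 from rfl, show (0*1 : ZMod 4) = 0 from rfl,
      show (0*2 : ZMod 4) = 0 from rfl, show (0*3 : ZMod 4) = 0 from rfl,
      gfun_zero, gfun_one, gfun_two, gfun_three, gfun_zero, chi_zero]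
    ring
  · rw [show (1*0 : ZMod 4) = 0 from rfl, show (1*1 : ZMod 4) = 1 from rfl,
      show (1*2 : ZMod 4) = 2 from rfl, show (1*3 : ZMod 4) = 3 from rfl,
      gfun_zero, gfun_one, gfun_two, gfun_three, gfun_one,
      chi_zero, chi_one', chi_two', chi_three']
    ring
  · rw [show (2*0 : ZMod 4) = 0 from rfl, show (2*1 : ZMod 4) = 2 from rfl,
      show (2*2 : ZMod 4) = 0 from rfl, show (2*3 : ZMod 4) = 2 from rfl,
      gfun_zero, gfun_one, gfun_two, gfun_three, gfun_two,
      chi_zero, chi_two']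
    ring
  · rw [show (3*0 : ZMod 4) = 0 from rfl, show (3*1 : ZMod 4) = 3 from rfl,
      show (3*2 : ZMod 4) = 2 from rfl, show (3*3 : ZMod 4) = 1 from rfl,
      gfun_zero, gfun_one, gfun_two, gfun_three, gfun_three,
      chi_zero, chi_one', chi_two', chi_three']
    ring

lemma prod_gfun {n : ℕ} (a b c : ℂ) (u : Fin n → ZMod 4) :
    ∏ k, gfun a b c (u k) = a ^ nI 0 u * b ^ (nI 1 u + nI 3 u) * c ^ nI 2 u := by
  rw [prod_fiber, prod_zmod4, gfun_zero, gfun_one, gfun_two, gfun_three, pow_add]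
  ring

open Classical in
noncomputable def sweC {n : ℕ} (S : Set (Fin n → ZMod 4)) (a b c : ℂ) : ℂ :=
  ∑ u ∈ Finset.univ.filter (· ∈ S), a ^ nI 0 u * b ^ (nI 1 u + nI 3 u) * c ^ nI 2 u

open Classical in
lemma swe_coe {n : ℕ} (S : Set (Fin n → ZMod 4)) (a b c : ℝ) :
    ((swe S a b c : ℝ) : ℂ) = sweC S (a : ℂ) (b : ℂ) (c : ℂ) := by
  rw [swe, sweC]
  push_cast
  rfl

open Classical in
/-- The forward MacWilliams identity over ℂ. -/
lemma main_id {n : ℕ} (C : AddSubgroup (Fin n → ZMod 4)) (a b c : ℂ) :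
    sweC (C : Set (Fin n → ZMod 4)) (a + 2*b + c) (a - c) (a - 2*b + c) =
      (((univ.filter (· ∈ C)) : Finset (Fin n → ZMod 4)).card : ℂ) *
        sweC (dualZ4 (C : Set (Fin n → ZMod 4))) a b c := by
  have h := poisson C (gfun a b c)
  rw [Finset.sum_congr rfl (fun u _ => by
      rw [ghat_gfun, prod_gfun]) ] at h
  rw [Finset.sum_congr rfl (fun v (_ : v ∈ univ.filter (· ∈ dualZ4 (C : Set (Fin n → ZMod 4)))) => prod_gfun a b c v)] at h
  rw [sweC, sweC]
  convert h using 2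
  ext x; simp

open Classical in
lemma sweC_homog {n : ℕ} (S : Set (Fin n → ZMod 4)) (a b c : ℂ) :
    sweC S (4*a) (4*b) (4*c) = 4^n * sweC S a b c := by
  rw [sweC, sweC, Finset.mul_sum]
  refine Finset.sum_congr rfl (fun u _ => ?_)
  rw [mul_pow, mul_pow, mul_pow]
  have h4 : (4:ℂ) ^ nI 0 u * 4 ^ (nI 1 u + nI 3 u) * 4 ^ nI 2 u = 4 ^ n := by
    rw [← pow_add, ← pow_add, nI_total]
  calc (4:ℂ) ^ nI 0 u * a ^ nI 0 u * (4 ^ (nI 1 u + nI 3 u) * b ^ (nI 1 u + nI 3 u)) *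
        (4 ^ nI 2 u * c ^ nI 2 u)
      = (4 ^ nI 0 u * 4 ^ (nI 1 u + nI 3 u) * 4 ^ nI 2 u) *
          (a ^ nI 0 u * b ^ (nI 1 u + nI 3 u) * c ^ nI 2 u) := by ring
    _ = _ := by rw [h4]

open Classical in
lemma sweC_400 {n : ℕ} (C : AddSubgroup (Fin n → ZMod 4)) :
    sweC (C : Set (Fin n → ZMod 4)) 4 0 0 = 4^n := by
  rw [sweC]
  rw [Finset.sum_eq_single_of_mem (0 : Fin n → ZMod 4)
    (Finset.mem_filter.mpr ⟨Finset.mem_univ _, show (0 : Fin n → ZMod 4) ∈ (C : Set (Fin n → ZMod 4)) from C.zero_mem⟩) ?_]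
  · have h0 : nI 0 (0 : Fin n → ZMod 4) = n := by simp [nI]
    have h1 : nI 1 (0 : Fin n → ZMod 4) = 0 := by
      simp [nI, show ((0:ZMod 4) = 1) ↔ False from by decide]
    have h2 : nI 2 (0 : Fin n → ZMod 4) = 0 := by
      simp [nI, show ((0:ZMod 4) = 2) ↔ False from by decide]
    have h3 : nI 3 (0 : Fin n → ZMod 4) = 0 := by
      simp [nI, show ((0:ZMod 4) = 3) ↔ False from by decide]
    rw [h0, h1, h2, h3]
    norm_num
  · intro u _ hu
    obtain ⟨k, hk⟩ : ∃ k, u k ≠ 0 := Function.ne_iff.mp hu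
    have hmem : ∀ t : ZMod 4, u k = t → nI t u ≠ 0 := fun t ht =>
      Finset.card_ne_zero_of_mem (Finset.mem_filter.mpr ⟨Finset.mem_univ _, ht⟩)
    have hk' : u k = 1 ∨ u k = 2 ∨ u k = 3 := by
      revert hk; generalize u k = t; revert t; decide
    rcases hk' with h|h|h
    · rw [zero_pow (by have := hmem 1 h; omega)]; ring
    · rw [zero_pow (n := nI 2 u) (hmem 2 h)]; ring
    · rw [zero_pow (by have := hmem 3 h; omega)]; ring

open Classical in
lemma sweC_111 {n : ℕ} (S : Set (Fin n → ZMod 4)) :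
    sweC S 1 1 1 = (((univ.filter (· ∈ S)) : Finset (Fin n → ZMod 4)).card : ℂ) := by
  rw [sweC]
  simp

open Classical in
lemma card_mul_card {n : ℕ} (C : AddSubgroup (Fin n → ZMod 4)) :
    (((univ.filter (· ∈ C)) : Finset (Fin n → ZMod 4)).card : ℂ) *
      (((univ.filter (· ∈ dualZ4 (C : Set (Fin n → ZMod 4)))) : Finset (Fin n → ZMod 4)).card : ℂ)
      = 4 ^ n := by
  have h := main_id C 1 1 1
  norm_num at h
  rw [sweC_400 C, sweC_111] at h
  rw [← h]

open Classical in
lemma dual_card_ne {n : ℕ} (C : AddSubgroup (Fin n → ZMod 4)) :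
    (((univ.filter (· ∈ dualZ4 (C : Set (Fin n → ZMod 4)))) : Finset (Fin n → ZMod 4)).card) ≠ 0 := by
  apply Finset.card_ne_zero_of_mem (a := (0 : Fin n → ZMod 4))
  refine Finset.mem_filter.mpr ⟨Finset.mem_univ _, ?_⟩
  intro y _
  simp

open Classical in
lemma natcard_dual {n : ℕ} (C : AddSubgroup (Fin n → ZMod 4)) :
    Nat.card (dualZ4 (C : Set (Fin n → ZMod 4))) =
      (((univ.filter (· ∈ dualZ4 (C : Set (Fin n → ZMod 4)))) : Finset (Fin n → ZMod 4)).card) := by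
  rw [Nat.card_eq_fintype_card, Fintype.card_subtype]

open Classical in
theorem macwilliams_swe_z4' {n : ℕ} (C : AddSubgroup (Fin n → ZMod 4)) :
    ∀ a b c : ℝ,
      swe (C : Set (Fin n → ZMod 4)) a b c =
        (Nat.card (dualZ4 (C : Set (Fin n → ZMod 4))) : ℝ)⁻¹ *
          swe (dualZ4 (C : Set (Fin n → ZMod 4))) (a + 2*b + c) (a - c) (a - 2*b + c) := by
  intro a b c
  have hDne : (((univ.filter (· ∈ dualZ4 (C : Set (Fin n → ZMod 4)))) : Finset (Fin n → ZMod 4)).card : ℂ) ≠ 0 :=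
    Nat.cast_ne_zero.mpr (dual_card_ne C)
  have hmul := card_mul_card C
  have h4 : (4:ℂ)^n ≠ 0 := pow_ne_zero _ (by norm_num)
  have key : sweC (C : Set (Fin n → ZMod 4)) (a:ℂ) (b:ℂ) (c:ℂ) =
      (((univ.filter (· ∈ dualZ4 (C : Set (Fin n → ZMod 4)))) : Finset (Fin n → ZMod 4)).card : ℂ)⁻¹ *
        sweC (dualZ4 (C : Set (Fin n → ZMod 4))) ((a:ℂ) + 2*b + c) ((a:ℂ) - c) ((a:ℂ) - 2*b + c) := by
    have h := main_id C ((a:ℂ) + 2*(b:ℂ) + (c:ℂ)) ((a:ℂ) - (c:ℂ)) ((a:ℂ) - 2*(b:ℂ) + (c:ℂ))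
    have e1 : ((a:ℂ) + 2*b + c) + 2*((a:ℂ) - c) + ((a:ℂ) - 2*b + c) = 4*(a:ℂ) := by ring
    have e2 : ((a:ℂ) + 2*b + c) - ((a:ℂ) - 2*b + c) = 4*(b:ℂ) := by ring
    have e3 : ((a:ℂ) + 2*b + c) - 2*((a:ℂ) - c) + ((a:ℂ) - 2*b + c) = 4*(c:ℂ) := by ring
    rw [e1, e2, e3, sweC_homog] at h
    rw [eq_inv_mul_iff_mul_eq₀ hDne]
    apply mul_left_cancel₀ h4
    calc (4:ℂ)^n * ((((univ.filter (· ∈ dualZ4 (C : Set (Fin n → ZMod 4)))) : Finset (Fin n → ZMod 4)).card : ℂ) * sweC (C : Set (Fin n → ZMod 4)) (a:ℂ) (b:ℂ) (c:ℂ))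
        = (((univ.filter (· ∈ dualZ4 (C : Set (Fin n → ZMod 4)))) : Finset (Fin n → ZMod 4)).card : ℂ) * ((4:ℂ)^n * sweC (C : Set (Fin n → ZMod 4)) (a:ℂ) (b:ℂ) (c:ℂ)) := by ring
      _ = (((univ.filter (· ∈ dualZ4 (C : Set (Fin n → ZMod 4)))) : Finset (Fin n → ZMod 4)).card : ℂ) * ((((univ.filter (· ∈ C)) : Finset (Fin n → ZMod 4)).card : ℂ) * sweC (dualZ4 (C : Set (Fin n → ZMod 4))) ((a:ℂ) + 2*b + c) ((a:ℂ) - c) ((a:ℂ) - 2*b + c)) := by rw [h]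
      _ = ((((univ.filter (· ∈ C)) : Finset (Fin n → ZMod 4)).card : ℂ) * (((univ.filter (· ∈ dualZ4 (C : Set (Fin n → ZMod 4)))) : Finset (Fin n → ZMod 4)).card : ℂ)) * sweC (dualZ4 (C : Set (Fin n → ZMod 4))) ((a:ℂ) + 2*b + c) ((a:ℂ) - c) ((a:ℂ) - 2*b + c) := by ring
      _ = (4:ℂ)^n * sweC (dualZ4 (C : Set (Fin n → ZMod 4))) ((a:ℂ) + 2*b + c) ((a:ℂ) - c) ((a:ℂ) - 2*b + c) := by rw [hmul]
  rw [show ((a:ℂ) + 2*b + c) = ((a + 2*b + c : ℝ) : ℂ) by push_cast; ring,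
      show ((a:ℂ) - c) = ((a - c : ℝ) : ℂ) by push_cast; ring,
      show ((a:ℂ) - 2*b + c) = ((a - 2*b + c : ℝ) : ℂ) by push_cast; ring,
      ← swe_coe, ← swe_coe] at key
  rw [natcard_dual C]
  apply Complex.ofReal_injective
  push_cast
  exact_mod_cast key

theorem macwilliams_swe_z4 {n : ℕ} (C : AddSubgroup (Fin n → ZMod 4)) :
    ∀ a b c : ℝ,
      swe (C : Set (Fin n → ZMod 4)) a b c =
        (Nat.card (dualZ4 (C : Set (Fin n → ZMod 4))) : ℝ)⁻¹ *
          swe (dualZ4 (C : Set (Fin n → ZMod 4))) (a + 2*b + c) (a - c) (a - 2*b + c) := by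
  exact macwilliams_swe_z4' C
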